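/- For the hypercube graph Q_n with n ≥ 2, mc^{nh}_{2^n}(Q_n) ≥ 2^{n−2}. -/

import Mathlib

open SimpleGraph

/-- `w_ψ`-style: `mcA k G` is the max over labelings `ψ : V → {1,…,k}` of the
minimum of `|ψ u − ψ v|` over edges, phrased via `sSup`. -/
noncomputable def mcA {V : Type*} (k : ℕ) (G : SimpleGraph V) : ℕ :=
  sSup {m | ∃ ψ : V → ℕ, (∀ v, ψ v ∈ Finset.Icc 1 k) ∧
    ∀ u v, G.Adj u v → m ≤ Nat.dist (ψ u) (ψ v)}

/-- No-hole anti-n-labeling number: `ψ` is a bijection from `V` onto `{1,…,n}`,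
`n = |V|`. -/
noncomputable def mcNH {V : Type*} [Fintype V] (G : SimpleGraph V) : ℕ :=
  sSup {m | ∃ ψ : V → ℕ, Set.BijOn ψ Set.univ (Set.Icc 1 (Fintype.card V)) ∧
    ∀ u v, G.Adj u v → m ≤ Nat.dist (ψ u) (ψ v)}

/-- The `n`-cube: vertices are `Fin n → Bool`, adjacent iff they differ in
exactly one coordinate. -/
def hypercube (n : ℕ) : SimpleGraph (Fin n → Bool) where
  Adj x y := (Finset.univ.filter (fun i => x i ≠ y i)).card = 1
  symm := ⟨by intro x y h; simpa [ne_comm] using h⟩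
  loopless := ⟨by intro x h; simp at h⟩

namespace Stmt19Aux

def bval {n : ℕ} (x : Fin n → Bool) : ℕ := ∑ i, (x i).toNat * 2 ^ (i : ℕ)
def bsum {n : ℕ} (x : Fin n → Bool) : ℕ := ∑ i, (x i).toNat

lemma bval_succ {n : ℕ} (x : Fin (n+1) → Bool) :
    bval x = (x 0).toNat + 2 * bval (fun i : Fin n => x i.succ) := by
  unfold bval
  rw [Fin.sum_univ_succ, Finset.mul_sum]
  simp [pow_succ]
  exact Finset.sum_congr rfl fun i _ => by ring

lemma bsum_succ {n : ℕ} (x : Fin (n+1) → Bool) :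
    bsum x = (x 0).toNat + bsum (fun i : Fin n => x i.succ) := by
  unfold bsum; rw [Fin.sum_univ_succ]

lemma bval_lt {n : ℕ} (x : Fin n → Bool) : bval x < 2 ^ n := by
  induction n with
  | zero => simp [bval]
  | succ n ih =>
    have h := ih (fun i => x i.succ)
    have ht : (x 0).toNat ≤ 1 := Bool.toNat_le _
    rw [bval_succ, pow_succ]
    omega

lemma bval_inj {n : ℕ} : Function.Injective (bval (n := n)) := by
  induction n with
  | zero => intro x y _; funext i; exact absurd i.2 (by omega)
  | succ n ih =>
    intro x y h
    rw [bval_succ x, bval_succ y] at h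
    have hx : (x 0).toNat ≤ 1 := Bool.toNat_le _
    have hy : (y 0).toNat ≤ 1 := Bool.toNat_le _
    have h2 : bval (fun i : Fin n => x i.succ) = bval (fun i : Fin n => y i.succ) := by omega
    have h3 := ih h2
    funext i
    refine Fin.cases ?_ ?_ i
    · cases hx0 : x 0 <;> cases hy0 : y 0 <;> simp_all
    · intro j; exact congrFun h3 j

/-- The labeling. -/
def lab {n : ℕ} (x : Fin n → Bool) : ℕ := 1 + (bsum x % 2) * 2 ^ (n-1) + bval x / 2

lemma lab_mem {n : ℕ} (hn : 1 ≤ n) (x : Fin n → Bool) : lab x ∈ Set.Icc 1 (2 ^ n) := by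
  have h1 : bval x < 2 ^ n := bval_lt x
  have h2 : 2 ^ n = 2 * 2 ^ (n-1) := by
    rw [← pow_succ']
    congr 1
    omega
  have h3 : bsum x % 2 ≤ 1 := by omega
  constructor
  · simp only [lab]; omega
  · have : (bsum x % 2) * 2 ^ (n-1) ≤ 1 * 2 ^ (n-1) := Nat.mul_le_mul_right _ h3
    simp only [lab]
    omega

lemma lab_inj {n : ℕ} : Function.Injective (lab (n := n+1)) := by
  intro x y h
  simp only [lab, Nat.add_sub_cancel] at h
  have hcx : bval x / 2 < 2 ^ n := by
    have := bval_lt x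
    rw [pow_succ] at this
    omega
  have hcy : bval y / 2 < 2 ^ n := by
    have := bval_lt y
    rw [pow_succ] at this
    omega
  have hpx : bsum x % 2 = 0 ∨ bsum x % 2 = 1 := by omega
  have hpy : bsum y % 2 = 0 ∨ bsum y % 2 = 1 := by omega
  have hkey : bsum x % 2 = bsum y % 2 ∧ bval x / 2 = bval y / 2 := by
    rcases hpx with hp | hp <;> rcases hpy with hq | hq <;> rw [hp, hq] at h <;> omega
  obtain ⟨hpar, hdiv⟩ := hkey
  -- tails equal
  have hx2 : bval x / 2 = bval (fun i : Fin n => x i.succ) := by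
    have := bval_succ x
    have ht : (x 0).toNat ≤ 1 := Bool.toNat_le _
    omega
  have hy2 : bval y / 2 = bval (fun i : Fin n => y i.succ) := by
    have := bval_succ y
    have ht : (y 0).toNat ≤ 1 := Bool.toNat_le _
    omega
  have htail : (fun i : Fin n => x i.succ) = (fun i : Fin n => y i.succ) :=
    bval_inj (by omega)
  have hsx := bsum_succ x
  have hsy := bsum_succ y
  have hsteq : bsum (fun i : Fin n => x i.succ) = bsum (fun i : Fin n => y i.succ) := by
    rw [htail]
  have hx : (x 0).toNat ≤ 1 := Bool.toNat_le _
  have hy : (y 0).toNat ≤ 1 := Bool.toNat_le _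
  have h0 : (x 0).toNat = (y 0).toNat := by omega
  funext i
  refine Fin.cases ?_ ?_ i
  · cases hx0 : x 0 <;> cases hy0 : y 0 <;> simp_all
  · intro j; exact congrFun htail j

/-- Key distance bound, one orientation. -/
lemma lab_dist {m : ℕ} (x y : Fin (m+2) → Bool) (j : Fin (m+2))
    (hxj : x j = false) (hyj : y j = true) (hoff : ∀ i, i ≠ j → x i = y i) :
    2 ^ m ≤ Nat.dist (lab x) (lab y) := by
  have hEv : ∑ i ∈ Finset.univ.erase j, (x i).toNat * 2 ^ (i:ℕ)
      = ∑ i ∈ Finset.univ.erase j, (y i).toNat * 2 ^ (i:ℕ) :=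
    Finset.sum_congr rfl fun i hi => by rw [hoff i (Finset.ne_of_mem_erase hi)]
  have hEs : ∑ i ∈ Finset.univ.erase j, (x i).toNat
      = ∑ i ∈ Finset.univ.erase j, (y i).toNat :=
    Finset.sum_congr rfl fun i hi => by rw [hoff i (Finset.ne_of_mem_erase hi)]
  have hx1 : (∑ i ∈ Finset.univ.erase j, (x i).toNat * 2 ^ (i:ℕ)) + (x j).toNat * 2 ^ (j:ℕ)
      = bval x := Finset.sum_erase_add _ _ (Finset.mem_univ j)
  have hy1 : (∑ i ∈ Finset.univ.erase j, (y i).toNat * 2 ^ (i:ℕ)) + (y j).toNat * 2 ^ (j:ℕ)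
      = bval y := Finset.sum_erase_add _ _ (Finset.mem_univ j)
  have hx2 : (∑ i ∈ Finset.univ.erase j, (x i).toNat) + (x j).toNat
      = bsum x := Finset.sum_erase_add _ _ (Finset.mem_univ j)
  have hy2 : (∑ i ∈ Finset.univ.erase j, (y i).toNat) + (y j).toNat
      = bsum y := Finset.sum_erase_add _ _ (Finset.mem_univ j)
  rw [hxj] at hx1 hx2
  rw [hyj] at hy1 hy2
  simp only [Bool.toNat_false, Bool.toNat_true, zero_mul, one_mul, add_zero] at hx1 hy1 hx2 hy2
  have hbv : bval y = bval x + 2 ^ (j:ℕ) := by omega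
  have hbs : bsum y = bsum x + 1 := by omega
  have hK : (2:ℕ) ^ (m+2-1) = 2 * 2 ^ m := by
    rw [show m+2-1 = m+1 from rfl, pow_succ]; ring
  have hpq : (bsum x % 2 = 0 ∧ bsum y % 2 = 1) ∨ (bsum x % 2 = 1 ∧ bsum y % 2 = 0) := by
    omega
  simp only [lab, Nat.dist]
  rcases Nat.eq_zero_or_pos (j : ℕ) with hj | hj
  · -- j = 0 : bval x even, bval y / 2 = bval x / 2
    have hj0 : j = 0 := Fin.ext hj
    have hx00 : x 0 = false := hj0 ▸ hxj
    have hx0 : bval x % 2 = 0 := by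
      have hs := bval_succ x
      rw [hx00] at hs
      simp only [Bool.toNat_false] at hs
      omega
    have hdv : bval y / 2 = bval x / 2 := by
      rw [hbv, hj, pow_zero]
      omega
    rw [hdv]
    clear hEv hEs hx1 hy1 hx2 hy2 hbv hbs hdv hxj hyj hoff
    rcases hpq with ⟨h1, h2⟩ | ⟨h1, h2⟩ <;> rw [h1, h2] <;>
      simp only [zero_mul, one_mul]
    · omega
    · omega
  · -- j ≥ 1
    obtain ⟨k, hk⟩ : ∃ k, (j : ℕ) = k + 1 := ⟨(j:ℕ) - 1, by omega⟩
    have hdv : bval y / 2 = bval x / 2 + 2 ^ k := by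
      rw [hbv, hk, pow_succ]
      rw [Nat.add_mul_div_right _ _ (by norm_num : (0:ℕ) < 2)]
    have hkm : 2 ^ k ≤ 2 ^ m := Nat.pow_le_pow_right (by norm_num) (by
      have := j.2
      omega)
    generalize ht : (2:ℕ) ^ k = t at hdv hkm
    rw [hdv]
    clear hEv hEs hx1 hy1 hx2 hy2 hbv hbs hdv hk hj hxj hyj hoff
    rcases hpq with ⟨h1, h2⟩ | ⟨h1, h2⟩ <;> rw [h1, h2] <;>
      simp only [zero_mul, one_mul] <;> omega

end Stmt19Aux

open Stmt19Aux in
theorem stmt_19 (n : ℕ) (hn : 2 ≤ n) :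
    2 ^ (n - 2) ≤ mcNH (hypercube n) := by
  obtain ⟨m, rfl⟩ : ∃ m, n = m + 2 := ⟨n - 2, by omega⟩
  have hcard : Fintype.card (Fin (m+2) → Bool) = 2 ^ (m+2) := by
    simp [Fintype.card_fun]
  -- the set is bounded above
  have hbdd : BddAbove {k | ∃ ψ : (Fin (m+2) → Bool) → ℕ,
      Set.BijOn ψ Set.univ (Set.Icc 1 (Fintype.card (Fin (m+2) → Bool))) ∧
      ∀ u v, (hypercube (m+2)).Adj u v → k ≤ Nat.dist (ψ u) (ψ v)} := by
    refine ⟨2 ^ (m+2), ?_⟩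
    rintro k ⟨ψ, hbij, hb⟩
    set x₀ : Fin (m+2) → Bool := fun _ => false with hx₀
    set y₀ : Fin (m+2) → Bool := Function.update x₀ 0 true with hy₀
    have hadj : (hypercube (m+2)).Adj x₀ y₀ := by
      show (Finset.univ.filter _).card = 1
      have : (Finset.univ.filter (fun i => x₀ i ≠ y₀ i)) = {0} := by
        ext i
        simp [hy₀, Function.update_apply, hx₀]
      rw [this]
      simp
    have h1 := (hbij.mapsTo (Set.mem_univ x₀)).2
    have h2 := (hbij.mapsTo (Set.mem_univ y₀)).2
    rw [hcard] at h1 h2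
    have := hb _ _ hadj
    simp only [Nat.dist] at this
    omega
  rw [mcNH]
  apply le_csSup hbdd
  refine ⟨lab, ?_, ?_⟩
  · rw [hcard]
    have hmt : Set.MapsTo (lab (n := m+2)) Set.univ (Set.Icc 1 (2 ^ (m+2))) :=
      fun x _ => lab_mem (by omega) x
    have hinj : Set.InjOn (lab (n := m+2)) Set.univ := lab_inj.injOn
    refine ⟨hmt, hinj, ?_⟩
    have himg : lab '' Set.univ ⊆ Set.Icc 1 (2 ^ (m+2)) := Set.image_subset_iff.mpr hmt
    have hIccfin : (Set.Icc 1 (2 ^ (m+2)) : Set ℕ).Finite := Set.finite_Icc _ _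
    have hcard1 : (lab '' (Set.univ : Set (Fin (m+2) → Bool))).ncard = 2 ^ (m+2) := by
      rw [Set.ncard_image_of_injOn hinj, Set.ncard_univ, Nat.card_eq_fintype_card, hcard]
    have hcard2 : (Set.Icc 1 (2 ^ (m+2)) : Set ℕ).ncard = 2 ^ (m+2) := by
      rw [← Finset.coe_Icc, Set.ncard_coe_finset, Nat.card_Icc]; omega
    have heq : lab '' Set.univ = Set.Icc 1 (2 ^ (m+2)) :=
      Set.eq_of_subset_of_ncard_le himg (by rw [hcard1, hcard2]) hIccfin
    intro a ha
    rw [← heq] at ha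
    obtain ⟨x, _, hx⟩ := ha
    exact ⟨x, Set.mem_univ x, hx⟩
  · intro u v hadj
    obtain ⟨j, hj⟩ := Finset.card_eq_one.mp hadj
    have hjmem : j ∈ Finset.univ.filter (fun i => u i ≠ v i) := hj ▸ Finset.mem_singleton_self j
    have hjne : u j ≠ v j := (Finset.mem_filter.mp hjmem).2
    have hoff : ∀ i, i ≠ j → u i = v i := by
      intro i hi
      by_contra hne
      have : i ∈ Finset.univ.filter (fun i => u i ≠ v i) := Finset.mem_filter.mpr ⟨Finset.mem_univ i, hne⟩
      rw [hj, Finset.mem_singleton] at this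
      exact hi this
    have hgoal : 2 ^ (m + 2 - 2) = 2 ^ m := by norm_num
    rw [hgoal]
    cases huj : u j <;> cases hvj : v j
    · exact absurd (huj.trans hvj.symm) hjne
    · exact lab_dist u v j huj hvj hoff
    · rw [Nat.dist_comm]
      exact lab_dist v u j hvj huj (fun i hi => (hoff i hi).symm)
    · exact absurd (huj.trans hvj.symm) hjne
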